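/- Let n ≥ 2 and p > 1, and let f : ℝⁿ → R̄ⁿ be any map. Let A_1, A_2 ∈ R̄ⁿ with A_1 ≠ A_2, and suppose there are sequences (a_k) and (b_k) in ℝⁿ with a_k ≠ 0, f(a_k) = A_1, f(b_k) = A_2, |a_k| → ∞, and |a_k − b_k| / |a_k|^{2−p} → 0. Then no subsequence of the family of maps x ↦ f(a_k + |a_k|^{2−p} x) converges uniformly with respect to the chordal distance q on any neighborhood of the origin to a map that is continuous at 0; in particular this family is not normal in any neighborhood of the origin. -/

import Mathlib

open Filter Topology Set
open scoped ENNReal NNReal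

noncomputable section

/-- `E n` is the Euclidean space `ℝⁿ`. -/
abbrev E (n : ℕ) := EuclideanSpace ℝ (Fin n)

/-- `RS n` is the one-point compactification `R̄ⁿ = ℝⁿ ∪ {∞}`, with `none` playing
the role of the point `∞`. -/
abbrev RS (n : ℕ) := Option (E n)

/-- The chordal (spherical) distance `q` on `R̄ⁿ`. -/
noncomputable def chordal {n : ℕ} : RS n → RS n → ℝ
  | some a, some b => ‖a - b‖ / (Real.sqrt (1 + ‖a‖ ^ 2) * Real.sqrt (1 + ‖b‖ ^ 2))
  | some a, none => 1 / Real.sqrt (1 + ‖a‖ ^ 2)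
  | none, some b => 1 / Real.sqrt (1 + ‖b‖ ^ 2)
  | none, none => 0

/-- The chordal diameter of a subset of `R̄ⁿ`. -/
noncomputable def qdiam {n : ℕ} (S : Set (RS n)) : ℝ :=
  sSup {d | ∃ a ∈ S, ∃ b ∈ S, d = chordal a b}

/-- The weighted ball `B_p(a, r) = {x : |x - a| < r |a|^(2-p)}`. -/
def Bp {n : ℕ} (p : ℝ) (a : E n) (r : ℝ) : Set (E n) :=
  {x | ‖x - a‖ < r * ‖a‖ ^ (2 - p)}

/-- `Qq α g x = limsup_{h → 0, h ≠ 0} q(g(x+h), g(x)) / |h|^α ∈ [0,∞]`. -/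
noncomputable def Qq {n : ℕ} (α : ℝ) (g : E n → RS n) (x : E n) : ℝ≥0∞ :=
  Filter.limsup (fun h : E n => ENNReal.ofReal (chordal (g (x + h)) (g x) / ‖h‖ ^ α))
    (𝓝[≠] (0 : E n))

/-- `(x_m)` is an `M_p`-sequence for `f` with parameter `l`:  `x_m ∈ ℝⁿ \ {0}`,
`|x_m| → ∞`, and for every subsequence and every `δ > 0` the set of values
`c ∈ R̄ⁿ` attained only finitely often by `f` in `⋃_k B_p(x_{m_k}, δ)` has at
most `l` elements. -/
def MpSeq {n : ℕ} (p : ℝ) (l : ℕ) (f : E n → RS n) (x : ℕ → E n) : Prop :=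
  (∀ m, x m ≠ 0) ∧ Tendsto (fun m => ‖x m‖) atTop atTop ∧
    ∀ φ : ℕ → ℕ, StrictMono φ → ∀ δ : ℝ, 0 < δ →
      {c : RS n | (f ⁻¹' {c} ∩ ⋃ k, Bp p (x (φ k)) δ).Finite}.Finite ∧
      {c : RS n | (f ⁻¹' {c} ∩ ⋃ k, Bp p (x (φ k)) δ).Finite}.ncard ≤ l

/-- `(x_m)` is a `μ_p`-sequence for `f` with parameter `l`: `x_m ∈ ℝⁿ \ {0}`,
`|x_m| → ∞`, and there are monotone decreasing null sequences `(L_m)`, `(r_m)` of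
positive numbers such that `f(B_p(x_m, r_m))` covers `R̄ⁿ` except possibly `l`
sets of chordal diameter at most `L_m`. -/
def MuSeq {n : ℕ} (p : ℝ) (l : ℕ) (f : E n → RS n) (x : ℕ → E n) : Prop :=
  (∀ m, x m ≠ 0) ∧ Tendsto (fun m => ‖x m‖) atTop atTop ∧
    ∃ L r : ℕ → ℝ, (∀ m, 0 < L m) ∧ (∀ m, 0 < r m) ∧ Antitone L ∧ Antitone r ∧
      Tendsto L atTop (𝓝 0) ∧ Tendsto r atTop (𝓝 0) ∧
      ∀ m, ∃ Es : Fin l → Set (RS n), (∀ j, qdiam (Es j) ≤ L m) ∧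
        ∀ c : RS n, c ∉ ⋃ j, Es j → c ∈ f '' Bp p (x m) (r m)

/-- Continuity of `g : ℝⁿ → R̄ⁿ` at a point, with respect to the chordal distance. -/
def QContinuousAt {n : ℕ} (g : E n → RS n) (x₀ : E n) : Prop :=
  ∀ ε : ℝ, 0 < ε → ∃ δ : ℝ, 0 < δ ∧ ∀ z : E n, ‖z - x₀‖ < δ → chordal (g z) (g x₀) < ε

noncomputable def sigmaRS {n : ℕ} : RS n → WithLp 2 (E n × ℝ)
  | some a => (WithLp.equiv 2 _).symm ((1 + ‖a‖ ^ 2)⁻¹ • a, ‖a‖ ^ 2 / (1 + ‖a‖ ^ 2))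
  | none => (WithLp.equiv 2 _).symm (0, 1)

lemma one_add_sq_pos {n : ℕ} (a : E n) : (0:ℝ) < 1 + ‖a‖ ^ 2 := by positivity

lemma chordal_nonneg {n : ℕ} (a b : RS n) : 0 ≤ chordal a b := by
  cases a <;> cases b <;> simp only [chordal] <;> positivity

lemma chordal_sq {n : ℕ} (a b : RS n) :
    chordal a b ^ 2 = dist (sigmaRS a) (sigmaRS b) ^ 2 := by
  have H : ∀ (a : E n), chordal (some a) none ^ 2
      = dist (sigmaRS (some a)) (sigmaRS none) ^ 2 := by
    intro a
    have ha := one_add_sq_pos a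
    rw [dist_eq_norm, sigmaRS, sigmaRS, WithLp.equiv_symm_apply, ← WithLp.toLp_sub, Prod.mk_sub_mk,
      WithLp.prod_norm_sq_eq_of_L2]
    simp only [chordal, WithLp.equiv_symm_apply, WithLp.toLp_fst, WithLp.toLp_snd, sub_zero,
      norm_smul, norm_inv, Real.norm_eq_abs, Real.norm_ofNat]
    rw [div_pow, one_pow, Real.sq_sqrt (le_of_lt ha), abs_of_pos ha]
    simp only [sq_abs]
    field_simp
    ring
  cases a with
  | none => cases b with
    | none => simp [chordal, sigmaRS]
    | some b =>
      have h1 : chordal (none : RS n) (some b) = chordal (some b) (none : RS n) := rfl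
      rw [h1, dist_comm]
      exact H b
  | some a => cases b with
    | none => exact H a
    | some b =>
      have ha := one_add_sq_pos a
      have hb := one_add_sq_pos b
      rw [dist_eq_norm, sigmaRS, sigmaRS, WithLp.equiv_symm_apply, ← WithLp.toLp_sub, Prod.mk_sub_mk,
        WithLp.prod_norm_sq_eq_of_L2]
      simp only [chordal, WithLp.equiv_symm_apply, WithLp.toLp_fst, WithLp.toLp_snd]
      rw [div_pow, mul_pow, Real.sq_sqrt (le_of_lt ha), Real.sq_sqrt (le_of_lt hb)]
      simp only [Real.norm_eq_abs, sq_abs]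
      rw [norm_sub_sq_real, norm_sub_sq_real]
      rw [real_inner_smul_left, real_inner_smul_right, norm_smul, norm_smul]
      simp only [Real.norm_eq_abs, norm_inv, abs_of_pos ha, abs_of_pos hb]
      field_simp
      ring

lemma chordal_eq_dist {n : ℕ} (a b : RS n) : chordal a b = dist (sigmaRS a) (sigmaRS b) := by
  have := chordal_sq a b
  have h1 := chordal_nonneg a b
  have h2 := dist_nonneg (x := sigmaRS a) (y := sigmaRS b)
  nlinarith

lemma sigmaRS_injective {n : ℕ} : Function.Injective (sigmaRS (n := n)) := by
  intro a b hab
  cases a with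
  | none => cases b with
    | none => rfl
    | some b =>
      exfalso
      have := congrArg (fun x : WithLp 2 (E n × ℝ) => x.snd) hab
      simp only [sigmaRS, WithLp.equiv_symm_apply, WithLp.toLp_snd] at this
      have hb := one_add_sq_pos b
      rw [eq_div_iff (ne_of_gt hb)] at this
      nlinarith
  | some a => cases b with
    | none =>
      exfalso
      have := congrArg (fun x : WithLp 2 (E n × ℝ) => x.snd) hab
      simp only [sigmaRS, WithLp.equiv_symm_apply, WithLp.toLp_snd] at this
      have ha := one_add_sq_pos a
      rw [div_eq_iff (ne_of_gt ha)] at this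
      nlinarith
    | some b =>
      have h1 := congrArg (fun x : WithLp 2 (E n × ℝ) => x.fst) hab
      have h2 := congrArg (fun x : WithLp 2 (E n × ℝ) => x.snd) hab
      simp only [sigmaRS, WithLp.equiv_symm_apply, WithLp.toLp_fst, WithLp.toLp_snd] at h1 h2
      have ha := one_add_sq_pos a
      have hb := one_add_sq_pos b
      have huv : ‖a‖ ^ 2 = ‖b‖ ^ 2 := by
        rw [div_eq_div_iff (ne_of_gt ha) (ne_of_gt hb)] at h2
        nlinarith
      rw [huv] at h1
      have := smul_right_injective (E n) (ne_of_gt (by positivity : (0:ℝ) < (1 + ‖b‖^2)⁻¹)) h1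
      rw [this]

lemma chordal_pos {n : ℕ} {a b : RS n} (h : a ≠ b) : 0 < chordal a b := by
  rw [chordal_eq_dist]
  exact dist_pos.mpr fun hc => h (sigmaRS_injective hc)

lemma chordal_triangle4 {n : ℕ} (a x y b : RS n) :
    chordal a b ≤ chordal a x + chordal x y + chordal y b := by
  simp only [chordal_eq_dist]
  calc dist (sigmaRS a) (sigmaRS b) ≤ dist (sigmaRS a) (sigmaRS y) + dist (sigmaRS y) (sigmaRS b) :=
        dist_triangle _ _ _
    _ ≤ (dist (sigmaRS a) (sigmaRS x) + dist (sigmaRS x) (sigmaRS y)) + dist (sigmaRS y) (sigmaRS b) := by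
        gcongr; exact dist_triangle _ _ _

lemma chordal_comm {n : ℕ} (a b : RS n) : chordal a b = chordal b a := by
  rw [chordal_eq_dist, chordal_eq_dist, dist_comm]


/-- If `f(a_k) = A₁`, `f(b_k) = A₂` with `A₁ ≠ A₂`, `a_k ≠ 0`,
`|a_k| → ∞` and `|a_k - b_k| / |a_k|^(2-p) → 0`, then no subsequence of the maps
`x ↦ f(a_k + |a_k|^(2-p) x)` converges uniformly (w.r.t. the chordal distance) on any
closed ball around the origin to a map continuous at `0`. -/
theorem stmt_10 (n : ℕ) (hn : 2 ≤ n) (p : ℝ) (hp : 1 < p)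
    (f : E n → RS n) (A₁ A₂ : RS n) (hA : A₁ ≠ A₂)
    (a b : ℕ → E n) (ha0 : ∀ k, a k ≠ 0)
    (hfa : ∀ k, f (a k) = A₁) (hfb : ∀ k, f (b k) = A₂)
    (ha : Tendsto (fun k => ‖a k‖) atTop atTop)
    (hclose : Tendsto (fun k => ‖a k - b k‖ / ‖a k‖ ^ (2 - p)) atTop (𝓝 0)) :
    ∀ φ : ℕ → ℕ, StrictMono φ → ∀ r : ℝ, 0 < r → ∀ g : E n → RS n, QContinuousAt g 0 →
      ¬ (∀ ε : ℝ, 0 < ε → ∃ N : ℕ, ∀ k ≥ N, ∀ z : E n, ‖z‖ ≤ r →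
          chordal (f (a (φ k) + ‖a (φ k)‖ ^ (2 - p) • z)) (g z) < ε) := by

  intro φ hφ r hr g hg hconv
  set d := chordal A₁ A₂ with hd_def
  have hd : 0 < d := chordal_pos hA
  have hε : 0 < d / 4 := by linarith
  obtain ⟨δ, hδ, hgδ⟩ := hg (d / 4) hε
  have hclose' : Tendsto (fun k => ‖a (φ k) - b (φ k)‖ / ‖a (φ k)‖ ^ (2 - p)) atTop (𝓝 0) :=
    hclose.comp hφ.tendsto_atTop
  have hsmall : ∀ᶠ k in atTop, ‖a (φ k) - b (φ k)‖ / ‖a (φ k)‖ ^ (2 - p) < min δ r :=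
    hclose'.eventually_lt_const (lt_min hδ hr)
  obtain ⟨K₀, hK₀⟩ := hsmall.exists_forall_of_atTop
  obtain ⟨N, hN⟩ := hconv (d / 4) hε
  set k := max N K₀
  set A := a (φ k) with hA_def
  set c := ‖A‖ ^ (2 - p) with hc_def
  have hApos : 0 < ‖A‖ := norm_pos_iff.mpr (ha0 (φ k))
  have hc : 0 < c := Real.rpow_pos_of_pos hApos _
  set z := c⁻¹ • (b (φ k) - A) with hz_def
  have hAz : A + c • z = b (φ k) := by
    rw [hz_def, smul_inv_smul₀ (ne_of_gt hc)]
    abel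
  have hznorm : ‖z‖ = ‖a (φ k) - b (φ k)‖ / ‖a (φ k)‖ ^ (2 - p) := by
    rw [hz_def, norm_smul, norm_inv, Real.norm_eq_abs, abs_of_pos hc, norm_sub_rev]
    rw [← hA_def, ← hc_def, inv_mul_eq_div]
  have hzlt : ‖z‖ < min δ r := by rw [hznorm]; exact hK₀ k (le_max_right _ _)
  have h1 : chordal A₁ (g 0) < d / 4 := by
    have := hN k (le_max_left _ _) 0 (by simp [le_of_lt hr])
    rwa [smul_zero, add_zero, ← hA_def, hfa] at this
  have h2 : chordal A₂ (g z) < d / 4 := by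
    have := hN k (le_max_left _ _) z (le_of_lt (lt_of_lt_of_le hzlt (min_le_right _ _)))
    rwa [← hA_def, ← hc_def, hAz, hfb] at this
  have h3 : chordal (g z) (g 0) < d / 4 := by
    apply hgδ
    rw [sub_zero]
    exact lt_of_lt_of_le hzlt (min_le_left _ _)
  have htri : d ≤ chordal A₁ (g 0) + chordal (g 0) (g z) + chordal (g z) A₂ :=
    chordal_triangle4 A₁ (g 0) (g z) A₂
  rw [chordal_comm (g 0) (g z), chordal_comm (g z) A₂] at htri
  linarith
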